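/- Let Λ be a discrete index set and ω an index distance on Λ which is (w₁,w₂,p₀,K)-admissible with constants C₁, C₂. If A ∈ ℂ^{Λ×Λ} is N-localized with respect to ω for some N ≥ K, then the matrix operator (Aa)_λ := Σ_{λ'} A_{λ,λ'} a_{λ'} is bounded from ℓ^p_{w₁}(Λ) to ℓ^p_{w₂}(Λ) for all p ∈ [p₀,∞], with operator norm at most C₁^{1/p} C₂^{1/p'} ‖A‖_{𝓑_N} for p ∈ [1,∞] (where 1/p + 1/p' = 1) and at most C₁ ‖A‖_{𝓑_N} for p ∈ (p₀,1]. -/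

import Mathlib

open scoped ENNReal

noncomputable abbrev oR (x : ℝ) : ℝ≥0∞ := ENNReal.ofReal x

lemma aux_fin_rpow {ι : Type*} (s : Finset ι) (f : ι → ℝ≥0∞) {p : ℝ} (hp : 0 < p) (hp1 : p ≤ 1) :
    (∑ i ∈ s, f i) ^ p ≤ ∑ i ∈ s, f i ^ p := by
  induction s using Finset.cons_induction with
  | empty => simp [ENNReal.zero_rpow_of_pos hp]
  | cons a s ha ih =>
      rw [Finset.sum_cons, Finset.sum_cons]
      exact (ENNReal.rpow_add_le_add_rpow _ _ hp.le hp1).trans (by gcongr)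

lemma aux_tsum_rpow_le {ι : Type*} (f : ι → ℝ≥0∞) {p : ℝ} (hp : 0 < p) (hp1 : p ≤ 1) :
    (∑' i, f i) ^ p ≤ ∑' i, f i ^ p := by
  have h2 : ∑' i, f i ≤ (∑' i, f i ^ p) ^ (1 / p) := by
    rw [ENNReal.tsum_eq_iSup_sum]
    refine iSup_le fun s => ?_
    calc ∑ i ∈ s, f i = ((∑ i ∈ s, f i) ^ p) ^ (1 / p) := by
          rw [← ENNReal.rpow_mul, mul_one_div_cancel hp.ne', ENNReal.rpow_one]
      _ ≤ (∑' i, f i ^ p) ^ (1 / p) := by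
          refine ENNReal.rpow_le_rpow ((aux_fin_rpow s f hp hp1).trans ?_) (by positivity)
          exact ENNReal.sum_le_tsum s
  calc (∑' i, f i) ^ p ≤ ((∑' i, f i ^ p) ^ (1 / p)) ^ p := ENNReal.rpow_le_rpow h2 hp.le
    _ = ∑' i, f i ^ p := by
        rw [← ENNReal.rpow_mul, one_div, inv_mul_cancel₀ hp.ne', ENNReal.rpow_one]

lemma aux_tsum_le_rpow {ι : Type*} (f : ι → ℝ≥0∞) {q : ℝ} (hq : 1 ≤ q) :
    ∑' i, f i ^ q ≤ (∑' i, f i) ^ q := by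
  have hq0 : 0 < q := lt_of_lt_of_le one_pos hq
  have h := aux_tsum_rpow_le (fun i => f i ^ q) (p := 1/q) (by positivity) (by
    rw [div_le_one hq0]; exact hq)
  have hcan : ∀ x : ℝ≥0∞, (x ^ q) ^ (1/q) = x := fun x => by
    rw [← ENNReal.rpow_mul, mul_one_div_cancel hq0.ne', ENNReal.rpow_one]
  simp only [hcan] at h
  calc ∑' i, f i ^ q = ((∑' i, f i ^ q) ^ (1/q)) ^ q := by
        rw [← ENNReal.rpow_mul, one_div, inv_mul_cancel₀ hq0.ne', ENNReal.rpow_one]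
    _ ≤ (∑' i, f i) ^ q := ENNReal.rpow_le_rpow h hq0.le

lemma aux_holder {ι : Type*} (w f : ι → ℝ≥0∞) {p : ℝ} (hp : 1 ≤ p) :
    ∑' i, w i * f i ≤ (∑' i, w i) ^ (1 - p⁻¹) * (∑' i, w i * f i ^ p) ^ p⁻¹ := by
  rw [ENNReal.tsum_eq_iSup_sum]
  refine iSup_le fun s => (ENNReal.inner_le_weight_mul_Lp_of_nonneg s hp w f).trans ?_
  have h1 : (0:ℝ) ≤ 1 - p⁻¹ := by
    have : p⁻¹ ≤ 1 := by
      rw [inv_le_one_iff₀]; right; exact hp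
    linarith
  exact mul_le_mul' (ENNReal.rpow_le_rpow (ENNReal.sum_le_tsum s) h1)
    (ENNReal.rpow_le_rpow (ENNReal.sum_le_tsum s) (by positivity))

lemma aux_cancel {x : ℝ≥0∞} (hx0 : x ≠ 0) (hxt : x ≠ ⊤) (p : ℝ) :
    (x⁻¹) ^ (p - 1) * x ^ p = x := by
  rw [ENNReal.inv_rpow, ← ENNReal.rpow_neg, ← ENNReal.rpow_add _ _ hx0 hxt,
    show -(p - 1) + p = 1 by ring, ENNReal.rpow_one]

lemma aux_real_rpow_cancel {x : ℝ} (p : ℝ) (hx : 0 ≤ x) (hp : p ≠ 0) : (x ^ p) ^ (1/p) = x := by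
  rw [← Real.rpow_mul hx, mul_one_div_cancel hp, Real.rpow_one]

set_option maxHeartbeats 1000000 in
theorem stmt_5' {Λ : Type*} (ω : Λ → Λ → ℝ)
    (hω1 : ∀ l l' : Λ, 1 ≤ ω l l')
    (w₁ w₂ : Λ → ℝ) (hw₁ : ∀ l : Λ, 0 < w₁ l) (hw₂ : ∀ l : Λ, 0 < w₂ l)
    (p₀ K : ℝ) (hp₀ : 0 < p₀) (hp₀1 : p₀ ≤ 1) (hK : 1 ≤ K)
    (C₁ C₂ : ℝ) (hC₁ : 0 < C₁) (hC₂ : 0 < C₂)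
    (hadm₁ : ∀ l' : Λ, Summable (fun l : Λ => w₂ l ^ p₀ * ω l l' ^ (-(p₀ * K))) ∧
      ∑' l : Λ, w₂ l ^ p₀ * ω l l' ^ (-(p₀ * K)) ≤ C₁ ^ p₀ * w₁ l' ^ p₀)
    (hadm₂ : ∀ l : Λ, Summable (fun l' : Λ => ω l l' ^ (-K) * (w₁ l')⁻¹) ∧
      ∑' l' : Λ, ω l l' ^ (-K) * (w₁ l')⁻¹ ≤ C₂ * (w₂ l)⁻¹)
    (N : ℝ) (hNK : K ≤ N)
    (A : Λ → Λ → ℂ) (CA : ℝ) (hCA : 0 ≤ CA)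
    (hA : ∀ l l' : Λ, ‖A l l'‖ ≤ CA * ω l l' ^ (-N)) :
    (∀ p : ℝ, p₀ ≤ p → p ≤ 1 → ∃ C : ℝ, ∀ a : Λ → ℂ,
      Summable (fun l : Λ => (‖a l‖ * w₁ l) ^ p) →
        (∀ l : Λ, Summable (fun l' : Λ => A l l' * a l')) ∧
        Summable (fun l : Λ => (‖∑' l' : Λ, A l l' * a l'‖ * w₂ l) ^ p) ∧
        (∑' l : Λ, (‖∑' l' : Λ, A l l' * a l'‖ * w₂ l) ^ p) ^ (1 / p) ≤
          C * (∑' l : Λ, (‖a l‖ * w₁ l) ^ p) ^ (1 / p)) ∧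
    (∀ p : ℝ, p₀ < p → p ≤ 1 → ∀ a : Λ → ℂ,
      Summable (fun l : Λ => (‖a l‖ * w₁ l) ^ p) →
        (∑' l : Λ, (‖∑' l' : Λ, A l l' * a l'‖ * w₂ l) ^ p) ^ (1 / p) ≤
          C₁ * CA * (∑' l : Λ, (‖a l‖ * w₁ l) ^ p) ^ (1 / p)) ∧
    (∀ p : ℝ, 1 ≤ p → ∀ a : Λ → ℂ,
      Summable (fun l : Λ => (‖a l‖ * w₁ l) ^ p) →
        (∀ l : Λ, Summable (fun l' : Λ => A l l' * a l')) ∧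
        Summable (fun l : Λ => (‖∑' l' : Λ, A l l' * a l'‖ * w₂ l) ^ p) ∧
        (∑' l : Λ, (‖∑' l' : Λ, A l l' * a l'‖ * w₂ l) ^ p) ^ (1 / p) ≤
          C₁ ^ (1 / p) * C₂ ^ (1 - 1 / p) * CA *
            (∑' l : Λ, (‖a l‖ * w₁ l) ^ p) ^ (1 / p)) ∧
    (∀ a : Λ → ℂ, ∀ Ca : ℝ, (∀ l : Λ, ‖a l‖ * w₁ l ≤ Ca) →
      (∀ l : Λ, Summable (fun l' : Λ => A l l' * a l')) ∧
      ∀ l : Λ, ‖∑' l' : Λ, A l l' * a l'‖ * w₂ l ≤ C₂ * CA * Ca) := by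
  -- basic positivity facts
  have hωpos : ∀ l l', (0:ℝ) < ω l l' := fun l l' => lt_of_lt_of_le one_pos (hω1 l l')
  -- pointwise bound with exponent K
  have hAK : ∀ l l', ‖A l l'‖ ≤ CA * ω l l' ^ (-K) := by
    intro l l'
    refine (hA l l').trans (mul_le_mul_of_nonneg_left ?_ hCA)
    exact Real.rpow_le_rpow_of_exponent_le (hω1 l l') (by linarith)
  -- the ℓ∞ machinery: row summability and row bounds
  have key : ∀ (a : Λ → ℂ) (M : ℝ), 0 ≤ M → (∀ l', ‖a l'‖ * w₁ l' ≤ M) →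
      ∀ l, Summable (fun l' => ‖A l l' * a l'‖) ∧
        Summable (fun l' => A l l' * a l') ∧
        ‖∑' l' : Λ, A l l' * a l'‖ * w₂ l ≤ C₂ * CA * M := by
    intro a M hM0 hM l
    have hb : ∀ l', ‖A l l' * a l'‖ ≤ CA * M * (ω l l' ^ (-K) * (w₁ l')⁻¹) := by
      intro l'
      rw [norm_mul]
      have h2 : ‖a l'‖ ≤ M * (w₁ l')⁻¹ := by
        have h3 := hM l'
        rw [← le_div_iff₀ (hw₁ l')] at h3
        simpa [div_eq_mul_inv] using h3
      calc ‖A l l'‖ * ‖a l'‖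
          ≤ (CA * ω l l' ^ (-K)) * (M * (w₁ l')⁻¹) :=
            mul_le_mul (hAK l l') h2 (norm_nonneg _)
              (mul_nonneg hCA (Real.rpow_nonneg (hωpos l l').le _))
        _ = CA * M * (ω l l' ^ (-K) * (w₁ l')⁻¹) := by ring
    have hsummand : Summable (fun l' => CA * M * (ω l l' ^ (-K) * (w₁ l')⁻¹)) :=
      ((hadm₂ l).1).mul_left _
    have hsa : Summable (fun l' => ‖A l l' * a l'‖) :=
      Summable.of_nonneg_of_le (fun l' => norm_nonneg _) hb hsummand
    have hs : Summable (fun l' => A l l' * a l') := by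
      apply Summable.of_norm
      simpa using hsa
    refine ⟨hsa, hs, ?_⟩
    have hsn : Summable (fun l' => ‖A l l' * a l'‖) := by
      simpa using hsa
    have h1 : ‖∑' l' : Λ, A l l' * a l'‖ ≤ ∑' l', ‖A l l' * a l'‖ := by
      simpa using norm_tsum_le_tsum_norm hsn
    have h2 : ∑' l', ‖A l l' * a l'‖ ≤ CA * M * (C₂ * (w₂ l)⁻¹) := by
      calc ∑' l', ‖A l l' * a l'‖ ≤ ∑' l', CA * M * (ω l l' ^ (-K) * (w₁ l')⁻¹) :=
            Summable.tsum_le_tsum hb hsa hsummand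
        _ = CA * M * ∑' l', ω l l' ^ (-K) * (w₁ l')⁻¹ := tsum_mul_left
        _ ≤ CA * M * (C₂ * (w₂ l)⁻¹) :=
            mul_le_mul_of_nonneg_left (hadm₂ l).2 (mul_nonneg hCA hM0)
    calc ‖∑' l' : Λ, A l l' * a l'‖ * w₂ l
        ≤ (CA * M * (C₂ * (w₂ l)⁻¹)) * w₂ l := by
          apply mul_le_mul_of_nonneg_right (h1.trans h2) (hw₂ l).le
      _ = C₂ * CA * M * ((w₂ l)⁻¹ * w₂ l) := by ring
      _ = C₂ * CA * M := by rw [inv_mul_cancel₀ (hw₂ l).ne']; ring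
  -- bound on sup norm from ℓ^p norm
  have hMb : ∀ (p : ℝ), 0 < p → ∀ (a : Λ → ℂ),
      Summable (fun l => (‖a l‖ * w₁ l) ^ p) →
      ∀ l', ‖a l'‖ * w₁ l' ≤ (∑' l, (‖a l‖ * w₁ l) ^ p) ^ (1/p) := by
    intro p hp a ha l'
    have hnn : ∀ l, (0:ℝ) ≤ ‖a l‖ * w₁ l :=
      fun l => mul_nonneg (norm_nonneg _) (hw₁ l).le
    have h1 : (‖a l'‖ * w₁ l') ^ p ≤ ∑' l, (‖a l‖ * w₁ l) ^ p :=
      Summable.le_tsum ha l' (fun l _ => Real.rpow_nonneg (hnn l) p)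
    calc ‖a l'‖ * w₁ l'
        = ((‖a l'‖ * w₁ l') ^ p) ^ (1/p) :=
          (aux_real_rpow_cancel p (hnn l') hp.ne').symm
      _ ≤ (∑' l, (‖a l‖ * w₁ l) ^ p) ^ (1/p) :=
          Real.rpow_le_rpow (Real.rpow_nonneg (hnn l') p) h1 (by positivity)
  -- ENNReal versions of the data
  have hW1ne0 : ∀ l, ENNReal.ofReal (w₁ l) ≠ 0 := fun l => (ENNReal.ofReal_pos.2 (hw₁ l)).ne'
  have hW2ne0 : ∀ l, ENNReal.ofReal (w₂ l) ≠ 0 := fun l => (ENNReal.ofReal_pos.2 (hw₂ l)).ne'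
  have hnAE : ∀ l l', ENNReal.ofReal (‖A l l'‖) ≤
      ENNReal.ofReal CA * ENNReal.ofReal (ω l l') ^ (-K) := by
    intro l l'
    refine (ENNReal.ofReal_le_ofReal (hAK l l')).trans_eq ?_
    rw [ENNReal.ofReal_mul hCA, ENNReal.ofReal_rpow_of_pos (hωpos l l')]
  have hE2 : ∀ l, ∑' l', ENNReal.ofReal (ω l l') ^ (-K) * (ENNReal.ofReal (w₁ l'))⁻¹ ≤
      ENNReal.ofReal C₂ * (ENNReal.ofReal (w₂ l))⁻¹ := by
    intro l
    have hterm : ∀ l', ENNReal.ofReal (ω l l') ^ (-K) * (ENNReal.ofReal (w₁ l'))⁻¹ =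
        ENNReal.ofReal (ω l l' ^ (-K) * (w₁ l')⁻¹) := by
      intro l'
      rw [ENNReal.ofReal_mul (Real.rpow_nonneg (hωpos l l').le _),
        ENNReal.ofReal_rpow_of_pos (hωpos l l'), ENNReal.ofReal_inv_of_pos (hw₁ l')]
    calc ∑' l', ENNReal.ofReal (ω l l') ^ (-K) * (ENNReal.ofReal (w₁ l'))⁻¹
        = ∑' l', ENNReal.ofReal (ω l l' ^ (-K) * (w₁ l')⁻¹) := tsum_congr hterm
      _ = ENNReal.ofReal (∑' l', ω l l' ^ (-K) * (w₁ l')⁻¹) :=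
          (ENNReal.ofReal_tsum_of_nonneg (fun l' => mul_nonneg
            (Real.rpow_nonneg (hωpos l l').le _) (inv_nonneg.2 (hw₁ l').le)) (hadm₂ l).1).symm
      _ ≤ ENNReal.ofReal (C₂ * (w₂ l)⁻¹) := ENNReal.ofReal_le_ofReal (hadm₂ l).2
      _ = ENNReal.ofReal C₂ * (ENNReal.ofReal (w₂ l))⁻¹ := by
          rw [ENNReal.ofReal_mul hC₂.le, ENNReal.ofReal_inv_of_pos (hw₂ l)]
  have hE1' : ∀ l', ∑' l, (ENNReal.ofReal (w₂ l) * ENNReal.ofReal (ω l l') ^ (-K)) ^ p₀ ≤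
      (ENNReal.ofReal C₁ * ENNReal.ofReal (w₁ l')) ^ p₀ := by
    intro l'
    have hterm : ∀ l, (ENNReal.ofReal (w₂ l) * ENNReal.ofReal (ω l l') ^ (-K)) ^ p₀ =
        ENNReal.ofReal (w₂ l ^ p₀ * ω l l' ^ (-(p₀ * K))) := by
      intro l
      have he : -K * p₀ = -(p₀ * K) := by ring
      rw [ENNReal.mul_rpow_of_nonneg _ _ hp₀.le, ← ENNReal.rpow_mul, he,
        ENNReal.ofReal_mul (Real.rpow_nonneg (hw₂ l).le _),
        ENNReal.ofReal_rpow_of_pos (hw₂ l), ENNReal.ofReal_rpow_of_pos (hωpos l l')]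
    calc ∑' l, (ENNReal.ofReal (w₂ l) * ENNReal.ofReal (ω l l') ^ (-K)) ^ p₀
        = ∑' l, ENNReal.ofReal (w₂ l ^ p₀ * ω l l' ^ (-(p₀ * K))) := tsum_congr hterm
      _ = ENNReal.ofReal (∑' l, w₂ l ^ p₀ * ω l l' ^ (-(p₀ * K))) :=
          (ENNReal.ofReal_tsum_of_nonneg (fun l => mul_nonneg
            (Real.rpow_nonneg (hw₂ l).le _) (Real.rpow_nonneg (hωpos l l').le _)) (hadm₁ l').1).symm
      _ ≤ ENNReal.ofReal (C₁ ^ p₀ * w₁ l' ^ p₀) := ENNReal.ofReal_le_ofReal (hadm₁ l').2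
      _ = (ENNReal.ofReal C₁ * ENNReal.ofReal (w₁ l')) ^ p₀ := by
          rw [ENNReal.mul_rpow_of_nonneg _ _ hp₀.le,
            ENNReal.ofReal_mul (Real.rpow_nonneg hC₁.le _),
            ENNReal.ofReal_rpow_of_pos hC₁, ENNReal.ofReal_rpow_of_pos (hw₁ l')]
  have hE1p : ∀ p, p₀ ≤ p → ∀ l',
      ∑' l, (ENNReal.ofReal (w₂ l) * ENNReal.ofReal (ω l l') ^ (-K)) ^ p ≤
        (ENNReal.ofReal C₁ * ENNReal.ofReal (w₁ l')) ^ p := by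
    intro p hp l'
    have hq : 1 ≤ p / p₀ := (one_le_div hp₀).2 hp
    have hpe : p₀ * (p / p₀) = p := by field_simp
    calc ∑' l, (ENNReal.ofReal (w₂ l) * ENNReal.ofReal (ω l l') ^ (-K)) ^ p
        = ∑' l, ((ENNReal.ofReal (w₂ l) * ENNReal.ofReal (ω l l') ^ (-K)) ^ p₀) ^ (p / p₀) := by
          refine tsum_congr fun l => ?_
          rw [← ENNReal.rpow_mul, hpe]
      _ ≤ (∑' l, (ENNReal.ofReal (w₂ l) * ENNReal.ofReal (ω l l') ^ (-K)) ^ p₀) ^ (p / p₀) :=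
          aux_tsum_le_rpow _ hq
      _ ≤ ((ENNReal.ofReal C₁ * ENNReal.ofReal (w₁ l')) ^ p₀) ^ (p / p₀) :=
          ENNReal.rpow_le_rpow (hE1' l') (by positivity)
      _ = (ENNReal.ofReal C₁ * ENNReal.ofReal (w₁ l')) ^ p := by rw [← ENNReal.rpow_mul, hpe]
  have hE1one : ∀ l', ∑' l, ENNReal.ofReal (w₂ l) * ENNReal.ofReal (ω l l') ^ (-K) ≤
      ENNReal.ofReal C₁ * ENNReal.ofReal (w₁ l') := by
    intro l'
    simpa using hE1p 1 hp₀1 l'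
  -- ℓ¹-type bound on rows, in `ℝ≥0∞`
  have hT : ∀ (a : Λ → ℂ) (M : ℝ), 0 ≤ M → (∀ l', ‖a l'‖ * w₁ l' ≤ M) → ∀ l,
      ENNReal.ofReal (‖∑' l' : Λ, A l l' * a l'‖) ≤
        ∑' l', ENNReal.ofReal (‖A l l'‖) * ENNReal.ofReal (‖a l'‖) := by
    intro a M hM0 hM l
    obtain ⟨hsa, hs, _⟩ := key a M hM0 hM l
    have hsn : Summable (fun l' => ‖A l l' * a l'‖) := by
      simpa using hsa
    have h1 : ‖∑' l' : Λ, A l l' * a l'‖ ≤ ∑' l', ‖A l l' * a l'‖ := by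
      simpa using norm_tsum_le_tsum_norm hsn
    calc ENNReal.ofReal (‖∑' l' : Λ, A l l' * a l'‖)
        ≤ ENNReal.ofReal (∑' l', ‖A l l' * a l'‖) := ENNReal.ofReal_le_ofReal h1
      _ = ∑' l', ENNReal.ofReal (‖A l l' * a l'‖) :=
          ENNReal.ofReal_tsum_of_nonneg (fun l' => norm_nonneg _) hsa
      _ = ∑' l', ENNReal.ofReal (‖A l l'‖) * ENNReal.ofReal (‖a l'‖) := by
          refine tsum_congr fun l' => ?_
          rw [norm_mul, ENNReal.ofReal_mul (norm_nonneg _)]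
  -- the case `p ∈ [p₀, 1]`
  have core1 : ∀ p, p₀ ≤ p → p ≤ 1 → ∀ a : Λ → ℂ,
      Summable (fun l => (‖a l‖ * w₁ l) ^ p) →
      (∀ l, Summable (fun l' => A l l' * a l')) ∧
      Summable (fun l => (‖∑' l' : Λ, A l l' * a l'‖ * w₂ l) ^ p) ∧
      (∑' l, (‖∑' l' : Λ, A l l' * a l'‖ * w₂ l) ^ p) ^ (1/p) ≤
        C₁ * CA * (∑' l, (‖a l‖ * w₁ l) ^ p) ^ (1/p) := by
    intro p hpl hpu a ha
    have hppos : 0 < p := lt_of_lt_of_le hp₀ hpl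
    have hnn : ∀ l, (0:ℝ) ≤ ‖a l‖ * w₁ l :=
      fun l => mul_nonneg (norm_nonneg _) (hw₁ l).le
    have honn : ∀ l, (0:ℝ) ≤ ‖∑' l' : Λ, A l l' * a l'‖ * w₂ l :=
      fun l => mul_nonneg (norm_nonneg _) (hw₂ l).le
    have hR0 : 0 ≤ ∑' l, (‖a l‖ * w₁ l) ^ p :=
      tsum_nonneg (fun l => Real.rpow_nonneg (hnn l) _)
    set M := (∑' l, (‖a l‖ * w₁ l) ^ p) ^ (1/p) with hMdef
    have hM0 : 0 ≤ M := Real.rpow_nonneg hR0 _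
    have hM := hMb p hppos a ha
    have chain : ∑' l, ENNReal.ofReal ((‖∑' l' : Λ, A l l' * a l'‖ * w₂ l) ^ p) ≤
        ENNReal.ofReal ((C₁ * CA) ^ p) *
          ENNReal.ofReal (∑' l, (‖a l‖ * w₁ l) ^ p) := by
      calc ∑' l, ENNReal.ofReal ((‖∑' l' : Λ, A l l' * a l'‖ * w₂ l) ^ p)
          = ∑' l, (ENNReal.ofReal (‖∑' l' : Λ, A l l' * a l'‖) *
              ENNReal.ofReal (w₂ l)) ^ p := by
            refine tsum_congr fun l => ?_
            rw [← ENNReal.ofReal_rpow_of_nonneg (honn l) hppos.le,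
              ENNReal.ofReal_mul (norm_nonneg _)]
        _ ≤ ∑' l, ((∑' l', ENNReal.ofReal (‖A l l'‖) *
              ENNReal.ofReal (‖a l'‖)) * ENNReal.ofReal (w₂ l)) ^ p :=
            ENNReal.tsum_le_tsum fun l =>
              ENNReal.rpow_le_rpow (mul_le_mul_left (hT a M hM0 hM l) _) hppos.le
        _ = ∑' l, (∑' l', ENNReal.ofReal (‖A l l'‖) *
              ENNReal.ofReal (‖a l'‖) * ENNReal.ofReal (w₂ l)) ^ p := by
            refine tsum_congr fun l => ?_
            rw [ENNReal.tsum_mul_right]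
        _ ≤ ∑' l, ∑' l', (ENNReal.ofReal (‖A l l'‖) *
              ENNReal.ofReal (‖a l'‖) * ENNReal.ofReal (w₂ l)) ^ p :=
            ENNReal.tsum_le_tsum fun l => aux_tsum_rpow_le _ hppos hpu
        _ = ∑' (l' : Λ) (l : Λ), (ENNReal.ofReal (‖A l l'‖) *
              ENNReal.ofReal (‖a l'‖) * ENNReal.ofReal (w₂ l)) ^ p :=
            ENNReal.tsum_comm
        _ = ∑' l', ENNReal.ofReal (‖a l'‖) ^ p *
              ∑' l, (ENNReal.ofReal (‖A l l'‖) * ENNReal.ofReal (w₂ l)) ^ p := by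
            refine tsum_congr fun l' => ?_
            rw [← ENNReal.tsum_mul_left]
            refine tsum_congr fun l => ?_
            rw [show ENNReal.ofReal (‖A l l'‖) * ENNReal.ofReal (‖a l'‖) *
                  ENNReal.ofReal (w₂ l) = ENNReal.ofReal (‖a l'‖) *
                  (ENNReal.ofReal (‖A l l'‖) * ENNReal.ofReal (w₂ l)) by ring,
              ENNReal.mul_rpow_of_nonneg _ _ hppos.le]
        _ ≤ ∑' l', ENNReal.ofReal (‖a l'‖) ^ p *
              (ENNReal.ofReal CA ^ p * (ENNReal.ofReal C₁ * ENNReal.ofReal (w₁ l')) ^ p) := by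
            refine ENNReal.tsum_le_tsum fun l' => mul_le_mul_right ?_ _
            calc ∑' l, (ENNReal.ofReal (‖A l l'‖) * ENNReal.ofReal (w₂ l)) ^ p
                ≤ ∑' l, (ENNReal.ofReal CA * (ENNReal.ofReal (w₂ l) *
                    ENNReal.ofReal (ω l l') ^ (-K))) ^ p := by
                  refine ENNReal.tsum_le_tsum fun l => ENNReal.rpow_le_rpow ?_ hppos.le
                  calc ENNReal.ofReal (‖A l l'‖) * ENNReal.ofReal (w₂ l)
                      ≤ ENNReal.ofReal CA * ENNReal.ofReal (ω l l') ^ (-K) *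
                          ENNReal.ofReal (w₂ l) := mul_le_mul_left (hnAE l l') _
                    _ = ENNReal.ofReal CA * (ENNReal.ofReal (w₂ l) *
                          ENNReal.ofReal (ω l l') ^ (-K)) := by ring
              _ = ENNReal.ofReal CA ^ p * ∑' l, (ENNReal.ofReal (w₂ l) *
                    ENNReal.ofReal (ω l l') ^ (-K)) ^ p := by
                  rw [← ENNReal.tsum_mul_left]
                  exact tsum_congr fun l => by rw [ENNReal.mul_rpow_of_nonneg _ _ hppos.le]
              _ ≤ ENNReal.ofReal CA ^ p * (ENNReal.ofReal C₁ * ENNReal.ofReal (w₁ l')) ^ p :=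
                  mul_le_mul_right (hE1p p hpl l') _
        _ = ENNReal.ofReal ((C₁ * CA) ^ p) *
              ∑' l', ENNReal.ofReal ((‖a l'‖ * w₁ l') ^ p) := by
            rw [← ENNReal.tsum_mul_left]
            refine tsum_congr fun l' => ?_
            rw [← ENNReal.ofReal_rpow_of_nonneg (hnn l') hppos.le,
              ← ENNReal.ofReal_rpow_of_nonneg (mul_nonneg hC₁.le hCA) hppos.le,
              ENNReal.ofReal_mul (norm_nonneg _),
              ENNReal.ofReal_mul hC₁.le,
              ENNReal.mul_rpow_of_nonneg _ _ hppos.le, ENNReal.mul_rpow_of_nonneg _ _ hppos.le,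
              ENNReal.mul_rpow_of_nonneg _ _ hppos.le]
            ring
        _ = ENNReal.ofReal ((C₁ * CA) ^ p) *
              ENNReal.ofReal (∑' l, (‖a l‖ * w₁ l) ^ p) := by
            rw [ENNReal.ofReal_tsum_of_nonneg (fun l => Real.rpow_nonneg (hnn l) _) ha]
    have hRHSne : ENNReal.ofReal ((C₁ * CA) ^ p) *
        ENNReal.ofReal (∑' l, (‖a l‖ * w₁ l) ^ p) ≠ ⊤ :=
      ENNReal.mul_ne_top ENNReal.ofReal_ne_top ENNReal.ofReal_ne_top
    have hLHSne : (∑' l, ENNReal.ofReal ((‖∑' l' : Λ, A l l' * a l'‖ * w₂ l) ^ p)) ≠ ⊤ :=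
      ne_top_of_le_ne_top hRHSne chain
    have hsout : Summable (fun l => (‖∑' l' : Λ, A l l' * a l'‖ * w₂ l) ^ p) := by
      have h := ENNReal.summable_toReal hLHSne
      exact h.congr fun l => ENNReal.toReal_ofReal (Real.rpow_nonneg (honn l) _)
    refine ⟨fun l => (key a M hM0 hM l).2.1, hsout, ?_⟩
    have htsum_eq : ∑' l, (‖∑' l' : Λ, A l l' * a l'‖ * w₂ l) ^ p =
        (∑' l, ENNReal.ofReal ((‖∑' l' : Λ, A l l' * a l'‖ * w₂ l) ^ p)).toReal := by
      rw [ENNReal.tsum_toReal_eq (fun l => ENNReal.ofReal_ne_top)]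
      exact tsum_congr fun l => (ENNReal.toReal_ofReal (Real.rpow_nonneg (honn l) _)).symm
    have hfin : (∑' l, ENNReal.ofReal ((‖∑' l' : Λ, A l l' * a l'‖ * w₂ l) ^ p)).toReal ≤
        (C₁ * CA) ^ p * ∑' l, (‖a l‖ * w₁ l) ^ p := by
      have h := ENNReal.toReal_mono hRHSne chain
      rwa [ENNReal.toReal_mul, ENNReal.toReal_ofReal (Real.rpow_nonneg (mul_nonneg hC₁.le hCA) _),
        ENNReal.toReal_ofReal hR0] at h
    rw [htsum_eq]
    calc ((∑' l, ENNReal.ofReal ((‖∑' l' : Λ, A l l' * a l'‖ * w₂ l) ^ p)).toReal) ^ (1/p)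
        ≤ ((C₁ * CA) ^ p * ∑' l, (‖a l‖ * w₁ l) ^ p) ^ (1/p) :=
          Real.rpow_le_rpow ENNReal.toReal_nonneg hfin (by positivity)
      _ = C₁ * CA * (∑' l, (‖a l‖ * w₁ l) ^ p) ^ (1/p) := by
          rw [Real.mul_rpow (Real.rpow_nonneg (mul_nonneg hC₁.le hCA) _) hR0,
            aux_real_rpow_cancel p (mul_nonneg hC₁.le hCA) hppos.ne']
  -- the case `p ∈ [1, ∞)`
  have core2 : ∀ p : ℝ, 1 ≤ p → ∀ a : Λ → ℂ,
      Summable (fun l => (‖a l‖ * w₁ l) ^ p) →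
      (∀ l, Summable (fun l' => A l l' * a l')) ∧
      Summable (fun l => (‖∑' l' : Λ, A l l' * a l'‖ * w₂ l) ^ p) ∧
      (∑' l, (‖∑' l' : Λ, A l l' * a l'‖ * w₂ l) ^ p) ^ (1/p) ≤
        C₁ ^ (1/p) * C₂ ^ (1 - 1/p) * CA * (∑' l, (‖a l‖ * w₁ l) ^ p) ^ (1/p) := by
    intro p hp a ha
    have hppos : 0 < p := lt_of_lt_of_le one_pos hp
    have hp1 : (0:ℝ) ≤ p - 1 := by linarith
    have hnn : ∀ l, (0:ℝ) ≤ ‖a l‖ * w₁ l :=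
      fun l => mul_nonneg (norm_nonneg _) (hw₁ l).le
    have honn : ∀ l, (0:ℝ) ≤ ‖∑' l' : Λ, A l l' * a l'‖ * w₂ l :=
      fun l => mul_nonneg (norm_nonneg _) (hw₂ l).le
    have hR0 : 0 ≤ ∑' l, (‖a l‖ * w₁ l) ^ p :=
      tsum_nonneg (fun l => Real.rpow_nonneg (hnn l) _)
    set M := (∑' l, (‖a l‖ * w₁ l) ^ p) ^ (1/p) with hMdef
    have hM0 : 0 ≤ M := Real.rpow_nonneg hR0 _
    have hM := hMb p hppos a ha
    have hw1c : ∀ l', (ENNReal.ofReal (w₁ l'))⁻¹ * ENNReal.ofReal (w₁ l') = 1 :=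
      fun l' => ENNReal.inv_mul_cancel (hW1ne0 l') ENNReal.ofReal_ne_top
    -- the weighted Hölder bound on each row
    have hHold : ∀ l, ENNReal.ofReal (‖∑' l' : Λ, A l l' * a l'‖) ≤
        (∑' l', ENNReal.ofReal (‖A l l'‖) * (ENNReal.ofReal (w₁ l'))⁻¹) ^ (1 - p⁻¹) *
        (∑' l', ENNReal.ofReal (‖A l l'‖) * (ENNReal.ofReal (w₁ l'))⁻¹ *
          (ENNReal.ofReal (‖a l'‖) * ENNReal.ofReal (w₁ l')) ^ p) ^ p⁻¹ := by
      intro l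
      refine (hT a M hM0 hM l).trans ?_
      have h := aux_holder (fun l' => ENNReal.ofReal (‖A l l'‖) *
        (ENNReal.ofReal (w₁ l'))⁻¹)
        (fun l' => ENNReal.ofReal (‖a l'‖) * ENNReal.ofReal (w₁ l')) hp
      refine le_trans (le_of_eq (tsum_congr fun l' => ?_)) h
      calc ENNReal.ofReal (‖A l l'‖) * ENNReal.ofReal (‖a l'‖)
          = ENNReal.ofReal (‖A l l'‖) * ENNReal.ofReal (‖a l'‖) *
              ((ENNReal.ofReal (w₁ l'))⁻¹ * ENNReal.ofReal (w₁ l')) := by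
            rw [hw1c, mul_one]
        _ = ENNReal.ofReal (‖A l l'‖) * (ENNReal.ofReal (w₁ l'))⁻¹ *
              (ENNReal.ofReal (‖a l'‖) * ENNReal.ofReal (w₁ l')) := by ring
    -- bound on the Hölder weight sums
    have hU : ∀ l, ∑' l', ENNReal.ofReal (‖A l l'‖) * (ENNReal.ofReal (w₁ l'))⁻¹ ≤
        ENNReal.ofReal (CA * C₂) * (ENNReal.ofReal (w₂ l))⁻¹ := by
      intro l
      calc ∑' l', ENNReal.ofReal (‖A l l'‖) * (ENNReal.ofReal (w₁ l'))⁻¹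
          ≤ ∑' l', ENNReal.ofReal CA * (ENNReal.ofReal (ω l l') ^ (-K) *
              (ENNReal.ofReal (w₁ l'))⁻¹) := by
            refine ENNReal.tsum_le_tsum fun l' => ?_
            refine le_trans (mul_le_mul_left (hnAE l l') _) (le_of_eq ?_)
            ring
        _ = ENNReal.ofReal CA * ∑' l', ENNReal.ofReal (ω l l') ^ (-K) *
              (ENNReal.ofReal (w₁ l'))⁻¹ := ENNReal.tsum_mul_left
        _ ≤ ENNReal.ofReal CA * (ENNReal.ofReal C₂ * (ENNReal.ofReal (w₂ l))⁻¹) :=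
            mul_le_mul_right (hE2 l) _
        _ = ENNReal.ofReal (CA * C₂) * (ENNReal.ofReal (w₂ l))⁻¹ := by
            rw [ENNReal.ofReal_mul hCA]; ring
    -- per-row power bound
    have hstep : ∀ l, (ENNReal.ofReal (‖∑' l' : Λ, A l l' * a l'‖) *
        ENNReal.ofReal (w₂ l)) ^ p ≤
        ENNReal.ofReal (CA * C₂) ^ (p - 1) * (ENNReal.ofReal (w₂ l) *
          ∑' l', ENNReal.ofReal (‖A l l'‖) * (ENNReal.ofReal (w₁ l'))⁻¹ *
            (ENNReal.ofReal (‖a l'‖) * ENNReal.ofReal (w₁ l')) ^ p) := by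
      intro l
      set U := ∑' l', ENNReal.ofReal (‖A l l'‖) * (ENNReal.ofReal (w₁ l'))⁻¹ with hUdef
      set G := ∑' l', ENNReal.ofReal (‖A l l'‖) * (ENNReal.ofReal (w₁ l'))⁻¹ *
        (ENNReal.ofReal (‖a l'‖) * ENNReal.ofReal (w₁ l')) ^ p with hGdef
      calc (ENNReal.ofReal (‖∑' l' : Λ, A l l' * a l'‖) * ENNReal.ofReal (w₂ l)) ^ p
          ≤ (U ^ (1 - p⁻¹) * G ^ p⁻¹ * ENNReal.ofReal (w₂ l)) ^ p :=
            ENNReal.rpow_le_rpow (mul_le_mul_left (hHold l) _) hppos.le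
        _ = U ^ ((1 - p⁻¹) * p) * G ^ (p⁻¹ * p) * ENNReal.ofReal (w₂ l) ^ p := by
            rw [ENNReal.mul_rpow_of_nonneg _ _ hppos.le, ENNReal.mul_rpow_of_nonneg _ _ hppos.le,
              ← ENNReal.rpow_mul, ← ENNReal.rpow_mul]
        _ = U ^ (p - 1) * G * ENNReal.ofReal (w₂ l) ^ p := by
            rw [show (1 - p⁻¹) * p = p - 1 by field_simp, inv_mul_cancel₀ hppos.ne',
              ENNReal.rpow_one]
        _ ≤ (ENNReal.ofReal (CA * C₂) * (ENNReal.ofReal (w₂ l))⁻¹) ^ (p - 1) * G *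
              ENNReal.ofReal (w₂ l) ^ p :=
            mul_le_mul_left (mul_le_mul_left (ENNReal.rpow_le_rpow (hU l) hp1) _) _
        _ = ENNReal.ofReal (CA * C₂) ^ (p - 1) *
              ((ENNReal.ofReal (w₂ l))⁻¹ ^ (p - 1) * ENNReal.ofReal (w₂ l) ^ p) * G := by
            rw [ENNReal.mul_rpow_of_nonneg _ _ hp1]; ring
        _ = ENNReal.ofReal (CA * C₂) ^ (p - 1) * (ENNReal.ofReal (w₂ l) * G) := by
            rw [aux_cancel (hW2ne0 l) ENNReal.ofReal_ne_top]; ring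
    -- summing up
    have chain : ∑' l, ENNReal.ofReal ((‖∑' l' : Λ, A l l' * a l'‖ * w₂ l) ^ p) ≤
        ENNReal.ofReal ((CA * C₂) ^ (p - 1) * (CA * C₁)) *
          ENNReal.ofReal (∑' l, (‖a l‖ * w₁ l) ^ p) := by
      calc ∑' l, ENNReal.ofReal ((‖∑' l' : Λ, A l l' * a l'‖ * w₂ l) ^ p)
          = ∑' l, (ENNReal.ofReal (‖∑' l' : Λ, A l l' * a l'‖) *
              ENNReal.ofReal (w₂ l)) ^ p := by
            refine tsum_congr fun l => ?_
            rw [← ENNReal.ofReal_rpow_of_nonneg (honn l) hppos.le,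
              ENNReal.ofReal_mul (norm_nonneg _)]
        _ ≤ ∑' l, ENNReal.ofReal (CA * C₂) ^ (p - 1) * (ENNReal.ofReal (w₂ l) *
              ∑' l', ENNReal.ofReal (‖A l l'‖) * (ENNReal.ofReal (w₁ l'))⁻¹ *
                (ENNReal.ofReal (‖a l'‖) * ENNReal.ofReal (w₁ l')) ^ p) :=
            ENNReal.tsum_le_tsum hstep
        _ = ENNReal.ofReal (CA * C₂) ^ (p - 1) * ∑' (l : Λ) (l' : Λ),
              ENNReal.ofReal (w₂ l) * (ENNReal.ofReal (‖A l l'‖) *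
                (ENNReal.ofReal (w₁ l'))⁻¹ *
                (ENNReal.ofReal (‖a l'‖) * ENNReal.ofReal (w₁ l')) ^ p) := by
            rw [ENNReal.tsum_mul_left]
            refine congrArg _ (tsum_congr fun l => ?_)
            rw [ENNReal.tsum_mul_left]
        _ = ENNReal.ofReal (CA * C₂) ^ (p - 1) * ∑' (l' : Λ) (l : Λ),
              ENNReal.ofReal (w₂ l) * (ENNReal.ofReal (‖A l l'‖) *
                (ENNReal.ofReal (w₁ l'))⁻¹ *
                (ENNReal.ofReal (‖a l'‖) * ENNReal.ofReal (w₁ l')) ^ p) := by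
            rw [ENNReal.tsum_comm]
        _ ≤ ENNReal.ofReal (CA * C₂) ^ (p - 1) * ∑' l',
              (ENNReal.ofReal (w₁ l'))⁻¹ *
                (ENNReal.ofReal (‖a l'‖) * ENNReal.ofReal (w₁ l')) ^ p *
              (ENNReal.ofReal CA * (ENNReal.ofReal C₁ * ENNReal.ofReal (w₁ l'))) := by
            refine mul_le_mul_right (ENNReal.tsum_le_tsum fun l' => ?_) _
            calc ∑' l, ENNReal.ofReal (w₂ l) * (ENNReal.ofReal (‖A l l'‖) *
                  (ENNReal.ofReal (w₁ l'))⁻¹ *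
                  (ENNReal.ofReal (‖a l'‖) * ENNReal.ofReal (w₁ l')) ^ p)
                = (ENNReal.ofReal (w₁ l'))⁻¹ *
                    (ENNReal.ofReal (‖a l'‖) * ENNReal.ofReal (w₁ l')) ^ p *
                    ∑' l, ENNReal.ofReal (‖A l l'‖) * ENNReal.ofReal (w₂ l) := by
                  rw [← ENNReal.tsum_mul_left]
                  exact tsum_congr fun l => by ring
              _ ≤ (ENNReal.ofReal (w₁ l'))⁻¹ *
                    (ENNReal.ofReal (‖a l'‖) * ENNReal.ofReal (w₁ l')) ^ p *
                    (ENNReal.ofReal CA * (ENNReal.ofReal C₁ * ENNReal.ofReal (w₁ l'))) := by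
                  refine mul_le_mul_right ?_ _
                  calc ∑' l, ENNReal.ofReal (‖A l l'‖) * ENNReal.ofReal (w₂ l)
                      ≤ ∑' l, ENNReal.ofReal CA * (ENNReal.ofReal (w₂ l) *
                          ENNReal.ofReal (ω l l') ^ (-K)) := by
                        refine ENNReal.tsum_le_tsum fun l => ?_
                        refine le_trans (mul_le_mul_left (hnAE l l') _) (le_of_eq ?_)
                        ring
                    _ = ENNReal.ofReal CA * ∑' l, ENNReal.ofReal (w₂ l) *
                          ENNReal.ofReal (ω l l') ^ (-K) := ENNReal.tsum_mul_left
                    _ ≤ ENNReal.ofReal CA * (ENNReal.ofReal C₁ * ENNReal.ofReal (w₁ l')) :=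
                        mul_le_mul_right (hE1one l') _
        _ = ENNReal.ofReal (CA * C₂) ^ (p - 1) * (ENNReal.ofReal CA * ENNReal.ofReal C₁ *
              ∑' l', (ENNReal.ofReal (‖a l'‖) * ENNReal.ofReal (w₁ l')) ^ p) := by
            refine congrArg _ ?_
            rw [← ENNReal.tsum_mul_left]
            refine tsum_congr fun l' => ?_
            calc (ENNReal.ofReal (w₁ l'))⁻¹ *
                  (ENNReal.ofReal (‖a l'‖) * ENNReal.ofReal (w₁ l')) ^ p *
                  (ENNReal.ofReal CA * (ENNReal.ofReal C₁ * ENNReal.ofReal (w₁ l')))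
                = ENNReal.ofReal CA * ENNReal.ofReal C₁ *
                    ((ENNReal.ofReal (‖a l'‖) * ENNReal.ofReal (w₁ l')) ^ p *
                    ((ENNReal.ofReal (w₁ l'))⁻¹ * ENNReal.ofReal (w₁ l'))) := by ring
              _ = ENNReal.ofReal CA * ENNReal.ofReal C₁ *
                    ((ENNReal.ofReal (‖a l'‖) * ENNReal.ofReal (w₁ l')) ^ p) := by
                  rw [hw1c, mul_one]
        _ = ENNReal.ofReal ((CA * C₂) ^ (p - 1) * (CA * C₁)) *
              ENNReal.ofReal (∑' l, (‖a l‖ * w₁ l) ^ p) := by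
            rw [ENNReal.ofReal_mul (Real.rpow_nonneg (mul_nonneg hCA hC₂.le) _),
              ← ENNReal.ofReal_rpow_of_nonneg (mul_nonneg hCA hC₂.le) hp1,
              ENNReal.ofReal_mul hCA,
              ENNReal.ofReal_tsum_of_nonneg (fun l => Real.rpow_nonneg (hnn l) _) ha,
              show (∑' l, ENNReal.ofReal ((‖a l‖ * w₁ l) ^ p)) =
                ∑' l, (ENNReal.ofReal (‖a l‖) * ENNReal.ofReal (w₁ l)) ^ p from
                tsum_congr fun l => by
                  rw [← ENNReal.ofReal_rpow_of_nonneg (hnn l) hppos.le,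
                    ENNReal.ofReal_mul (norm_nonneg _)],
              ENNReal.ofReal_mul hCA]
            ring
    -- back to the reals
    have hRHSne : ENNReal.ofReal ((CA * C₂) ^ (p - 1) * (CA * C₁)) *
        ENNReal.ofReal (∑' l, (‖a l‖ * w₁ l) ^ p) ≠ ⊤ :=
      ENNReal.mul_ne_top ENNReal.ofReal_ne_top ENNReal.ofReal_ne_top
    have hLHSne : (∑' l, ENNReal.ofReal ((‖∑' l' : Λ, A l l' * a l'‖ * w₂ l) ^ p)) ≠ ⊤ :=
      ne_top_of_le_ne_top hRHSne chain
    have hsout : Summable (fun l => (‖∑' l' : Λ, A l l' * a l'‖ * w₂ l) ^ p) := by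
      have h := ENNReal.summable_toReal hLHSne
      exact h.congr fun l => ENNReal.toReal_ofReal (Real.rpow_nonneg (honn l) _)
    refine ⟨fun l => (key a M hM0 hM l).2.1, hsout, ?_⟩
    have htsum_eq : ∑' l, (‖∑' l' : Λ, A l l' * a l'‖ * w₂ l) ^ p =
        (∑' l, ENNReal.ofReal ((‖∑' l' : Λ, A l l' * a l'‖ * w₂ l) ^ p)).toReal := by
      rw [ENNReal.tsum_toReal_eq (fun l => ENNReal.ofReal_ne_top)]
      exact tsum_congr fun l => (ENNReal.toReal_ofReal (Real.rpow_nonneg (honn l) _)).symm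
    have hCst0 : 0 ≤ (CA * C₂) ^ (p - 1) * (CA * C₁) :=
      mul_nonneg (Real.rpow_nonneg (mul_nonneg hCA hC₂.le) _) (mul_nonneg hCA hC₁.le)
    have hfin : (∑' l, ENNReal.ofReal ((‖∑' l' : Λ, A l l' * a l'‖ * w₂ l) ^ p)).toReal ≤
        (CA * C₂) ^ (p - 1) * (CA * C₁) * ∑' l, (‖a l‖ * w₁ l) ^ p := by
      have h := ENNReal.toReal_mono hRHSne chain
      rwa [ENNReal.toReal_mul, ENNReal.toReal_ofReal hCst0, ENNReal.toReal_ofReal hR0] at h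
    rw [htsum_eq]
    have halg : ((CA * C₂) ^ (p - 1) * (CA * C₁) * ∑' l, (‖a l‖ * w₁ l) ^ p) ^ (1/p) =
        C₁ ^ (1/p) * C₂ ^ (1 - 1/p) * CA * (∑' l, (‖a l‖ * w₁ l) ^ p) ^ (1/p) := by
      have he : (p - 1) * (1/p) = 1 - 1/p := by field_simp
      have h1p : (1:ℝ) - 1/p + 1/p = 1 := by ring
      calc ((CA * C₂) ^ (p - 1) * (CA * C₁) * ∑' l, (‖a l‖ * w₁ l) ^ p) ^ (1/p)
          = (((CA * C₂) ^ (p - 1)) ^ (1/p) * (CA * C₁) ^ (1/p)) *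
              (∑' l, (‖a l‖ * w₁ l) ^ p) ^ (1/p) := by
            rw [Real.mul_rpow hCst0 hR0,
              Real.mul_rpow (Real.rpow_nonneg (mul_nonneg hCA hC₂.le) _) (mul_nonneg hCA hC₁.le)]
        _ = (CA ^ (1 - 1/p) * C₂ ^ (1 - 1/p)) * (CA ^ (1/p) * C₁ ^ (1/p)) *
              (∑' l, (‖a l‖ * w₁ l) ^ p) ^ (1/p) := by
            rw [← Real.rpow_mul (mul_nonneg hCA hC₂.le), he, Real.mul_rpow hCA hC₂.le,
              Real.mul_rpow hCA hC₁.le]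
        _ = C₁ ^ (1/p) * C₂ ^ (1 - 1/p) * (CA ^ (1 - 1/p) * CA ^ (1/p)) *
              (∑' l, (‖a l‖ * w₁ l) ^ p) ^ (1/p) := by ring
        _ = C₁ ^ (1/p) * C₂ ^ (1 - 1/p) * CA *
              (∑' l, (‖a l‖ * w₁ l) ^ p) ^ (1/p) := by
            rw [← Real.rpow_add' hCA (by rw [h1p]; exact one_ne_zero), h1p, Real.rpow_one]
    calc ((∑' l, ENNReal.ofReal ((‖∑' l' : Λ, A l l' * a l'‖ * w₂ l) ^ p)).toReal) ^ (1/p)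
        ≤ ((CA * C₂) ^ (p - 1) * (CA * C₁) * ∑' l, (‖a l‖ * w₁ l) ^ p) ^ (1/p) :=
          Real.rpow_le_rpow ENNReal.toReal_nonneg hfin (by positivity)
      _ = C₁ ^ (1/p) * C₂ ^ (1 - 1/p) * CA *
            (∑' l, (‖a l‖ * w₁ l) ^ p) ^ (1/p) := halg
  -- assemble the four statements
  refine ⟨fun p hpl hpu => ⟨C₁ * CA, fun a ha => core1 p hpl hpu a ha⟩,
    fun p hpl hpu a ha => (core1 p hpl.le hpu a ha).2.2,
    fun p hp a ha => core2 p hp a ha, ?_⟩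
  intro a Ca hCa
  rcases isEmpty_or_nonempty Λ with h | h
  · exact ⟨fun l => isEmptyElim l, fun l => isEmptyElim l⟩
  · have hCa0 : 0 ≤ Ca :=
      le_trans (mul_nonneg (norm_nonneg _) (hw₁ h.some).le) (hCa h.some)
    exact ⟨fun l => (key a Ca hCa0 hCa l).2.1, fun l => (key a Ca hCa0 hCa l).2.2⟩




/-- If `ω` is a `(w₁,w₂,p₀,K)`-admissible index distance (constants `C₁, C₂`) and `A` is
`N`-localized with respect to `ω` for some `N ≥ K` (with localization constant `CA`,
standing for `‖A‖_{𝓑_N}`), then `A` maps `ℓ^p_{w₁}(Λ)` boundedly to `ℓ^p_{w₂}(Λ)` for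
all `p ∈ [p₀,∞]`, with operator norm at most `C₁^{1/p} C₂^{1/p'} ‖A‖_{𝓑_N}` for
`p ∈ [1,∞]` and at most `C₁ ‖A‖_{𝓑_N}` for `p ∈ (p₀,1]`. -/
theorem stmt_5 {Λ : Type*} (ω : Λ → Λ → ℝ) (C_S C_T : ℝ)
    (hω1 : ∀ l l' : Λ, 1 ≤ ω l l')
    (hdiag : ∀ l : Λ, ω l l = 1)
    (hCS : 1 ≤ C_S) (hCT : 1 ≤ C_T)
    (hsym : ∀ l l' : Λ, ω l l' ≤ C_S * ω l' l)
    (htri : ∀ l l' l'' : Λ, ω l l' ≤ C_T * ω l l'' * ω l'' l')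
    (w₁ w₂ : Λ → ℝ) (hw₁ : ∀ l : Λ, 0 < w₁ l) (hw₂ : ∀ l : Λ, 0 < w₂ l)
    (p₀ K : ℝ) (hp₀ : 0 < p₀) (hp₀1 : p₀ ≤ 1) (hK : 1 ≤ K)
    (C₁ C₂ : ℝ) (hC₁ : 0 < C₁) (hC₂ : 0 < C₂)
    (hadm₁ : ∀ l' : Λ, Summable (fun l : Λ => w₂ l ^ p₀ * ω l l' ^ (-(p₀ * K))) ∧
      ∑' l : Λ, w₂ l ^ p₀ * ω l l' ^ (-(p₀ * K)) ≤ C₁ ^ p₀ * w₁ l' ^ p₀)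
    (hadm₂ : ∀ l : Λ, Summable (fun l' : Λ => ω l l' ^ (-K) * (w₁ l')⁻¹) ∧
      ∑' l' : Λ, ω l l' ^ (-K) * (w₁ l')⁻¹ ≤ C₂ * (w₂ l)⁻¹)
    (N : ℝ) (hNK : K ≤ N)
    (A : Λ → Λ → ℂ) (CA : ℝ) (hCA : 0 ≤ CA)
    (hA : ∀ l l' : Λ, ‖A l l'‖ ≤ CA * ω l l' ^ (-N)) :
    -- boundedness for all finite `p ∈ [p₀,1]`, with some operator norm bound
    (∀ p : ℝ, p₀ ≤ p → p ≤ 1 → ∃ C : ℝ, ∀ a : Λ → ℂ,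
      Summable (fun l : Λ => (‖a l‖ * w₁ l) ^ p) →
        (∀ l : Λ, Summable (fun l' : Λ => A l l' * a l')) ∧
        Summable (fun l : Λ => (‖∑' l' : Λ, A l l' * a l'‖ * w₂ l) ^ p) ∧
        (∑' l : Λ, (‖∑' l' : Λ, A l l' * a l'‖ * w₂ l) ^ p) ^ (1 / p) ≤
          C * (∑' l : Λ, (‖a l‖ * w₁ l) ^ p) ^ (1 / p)) ∧
    -- operator norm at most `C₁ ‖A‖_{𝓑_N}` for `p ∈ (p₀,1]`
    (∀ p : ℝ, p₀ < p → p ≤ 1 → ∀ a : Λ → ℂ,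
      Summable (fun l : Λ => (‖a l‖ * w₁ l) ^ p) →
        (∑' l : Λ, (‖∑' l' : Λ, A l l' * a l'‖ * w₂ l) ^ p) ^ (1 / p) ≤
          C₁ * CA * (∑' l : Λ, (‖a l‖ * w₁ l) ^ p) ^ (1 / p)) ∧
    -- operator norm at most `C₁^{1/p} C₂^{1/p'} ‖A‖_{𝓑_N}` for finite `p ∈ [1,∞)`
    (∀ p : ℝ, 1 ≤ p → ∀ a : Λ → ℂ,
      Summable (fun l : Λ => (‖a l‖ * w₁ l) ^ p) →
        (∀ l : Λ, Summable (fun l' : Λ => A l l' * a l')) ∧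
        Summable (fun l : Λ => (‖∑' l' : Λ, A l l' * a l'‖ * w₂ l) ^ p) ∧
        (∑' l : Λ, (‖∑' l' : Λ, A l l' * a l'‖ * w₂ l) ^ p) ^ (1 / p) ≤
          C₁ ^ (1 / p) * C₂ ^ (1 - 1 / p) * CA *
            (∑' l : Λ, (‖a l‖ * w₁ l) ^ p) ^ (1 / p)) ∧
    -- the case `p = ∞`, with norm `C₂ ‖A‖_{𝓑_N}`
    (∀ a : Λ → ℂ, ∀ Ca : ℝ, (∀ l : Λ, ‖a l‖ * w₁ l ≤ Ca) →
      (∀ l : Λ, Summable (fun l' : Λ => A l l' * a l')) ∧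
      ∀ l : Λ, ‖∑' l' : Λ, A l l' * a l'‖ * w₂ l ≤ C₂ * CA * Ca) := by
  exact stmt_5' ω hω1 w₁ w₂ hw₁ hw₂ p₀ K hp₀ hp₀1 hK C₁ C₂ hC₁ hC₂ hadm₁ hadm₂ N hNK A CA hCA hA
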